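/- The linear program: minimize Σ_{j=1}^{σ} (1/j)·x_j subject to Σ_{j=1}^{σ} x_j ≥ m, Σ_{j=1}^{σ} (j−1)x_j ≤ s−1, x_j ≥ 0, has optimal value max( m/σ, max_{2≤j≤σ} ( 2m/j − (s−1)/(j(j−1)) ) ). -/

import Mathlib

/-- two-point sums over `Fin σ` -/
lemma sum_two_point {σ : ℕ} (i1 i2 : Fin σ) (h : i1 ≠ i2) (A B : ℝ) (g : Fin σ → ℝ) :
    ∑ j : Fin σ, g j * ((if j = i1 then A else 0) + (if j = i2 then B else 0))
      = g i1 * A + g i2 * B := by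
  simp only [mul_add, mul_ite, mul_zero, Finset.sum_add_distrib]
  rw [Finset.sum_ite_eq' Finset.univ i1 (fun j => g j * A),
      Finset.sum_ite_eq' Finset.univ i2 (fun j => g j * B)]
  simp

set_option maxHeartbeats 2000000 in
theorem single_supplier_lp_value (m s σ : ℕ) (hm : 1 ≤ m) (hs : 1 ≤ s) (hσ : 2 ≤ σ) :
    IsLeast
      {v : ℝ | ∃ x : Fin σ → ℝ, (∀ j, 0 ≤ x j) ∧
        ((m : ℝ) ≤ ∑ j, x j) ∧
        (∑ j : Fin σ, ((j : ℕ) : ℝ) * x j ≤ (s : ℝ) - 1) ∧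
        v = ∑ j : Fin σ, (1 / (((j : ℕ) : ℝ) + 1)) * x j}
      (max ((m : ℝ) / σ)
        ((Finset.Icc 2 σ).sup' (Finset.nonempty_Icc.2 hσ)
          (fun j : ℕ => 2 * (m : ℝ) / j - ((s : ℝ) - 1) / ((j : ℝ) * ((j : ℝ) - 1))))) := by
  have hm0 : (0:ℝ) < m := by exact_mod_cast hm
  have hs1 : (0:ℝ) ≤ (s:ℝ) - 1 := by
    have : (1:ℝ) ≤ s := by exact_mod_cast hs
    linarith
  have hσ0 : (0:ℝ) < σ := by
    have : (2:ℝ) ≤ σ := by exact_mod_cast hσ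
    linarith
  set t : ℝ := (s:ℝ) - 1 with ht
  constructor
  · -- membership
    rcases le_or_gt (m * (σ - 1)) (s - 1) with hA | hB
    · -- case A : all mass on the last coordinate
      have hA' : (m:ℝ) * ((σ:ℝ) - 1) ≤ t := by
        have := (Nat.cast_le (α := ℝ)).2 hA
        push_cast [Nat.cast_sub (by omega : 1 ≤ σ), Nat.cast_sub hs] at this
        linarith
      set i : Fin σ := ⟨σ - 1, by omega⟩ with hi
      have hival : ((i:ℕ):ℝ) = (σ:ℝ) - 1 := by
        show ((σ - 1 : ℕ):ℝ) = (σ:ℝ) - 1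
        push_cast [Nat.cast_sub (by omega : 1 ≤ σ)]; ring
      refine ⟨fun j => if j = i then (m:ℝ) else 0, ?_, ?_, ?_, ?_⟩
      · intro j; dsimp only; split
        · exact hm0.le
        · exact le_rfl
      · rw [Finset.sum_ite_eq' Finset.univ i (fun _ => (m:ℝ))]
        simp
      · have e : ∑ j : Fin σ, ((j:ℕ):ℝ) * (if j = i then (m:ℝ) else 0)
            = ((σ:ℝ) - 1) * m := by
          simp only [mul_ite, mul_zero]
          rw [Finset.sum_ite_eq' Finset.univ i (fun j => ((j:ℕ):ℝ) * m)]
          simp only [Finset.mem_univ, if_true]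
          rw [hival]
        rw [e]; linarith
      · have hv : ∑ j : Fin σ, (1 / (((j:ℕ):ℝ) + 1)) * (if j = i then (m:ℝ) else 0)
            = (m:ℝ) / σ := by
          simp only [mul_ite, mul_zero]
          rw [Finset.sum_ite_eq' Finset.univ i (fun j => (1 / (((j:ℕ):ℝ) + 1)) * m)]
          simp only [Finset.mem_univ, if_true, hival]
          have : (σ:ℝ) - 1 + 1 = σ := by ring
          rw [this]; ring
        rw [hv]
        apply max_eq_left
        apply Finset.sup'_le
        intro k hk
        rw [Finset.mem_Icc] at hk
        have hk2 : (2:ℝ) ≤ k := by exact_mod_cast hk.1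
        have hkσ : (k:ℝ) ≤ σ := by exact_mod_cast hk.2
        have hk0 : (0:ℝ) < k := by linarith
        have hkk : (0:ℝ) < (k:ℝ) * ((k:ℝ) - 1) := by nlinarith
        rw [div_sub_div _ _ (ne_of_gt hk0) (ne_of_gt hkk), div_le_div_iff₀ (by positivity) hσ0]
        nlinarith [mul_nonneg (mul_nonneg hm0.le (mul_nonneg (by linarith : (0:ℝ) ≤ (σ:ℝ) - k)
            (by linarith : (0:ℝ) ≤ (σ:ℝ) + 1 - k))) hk0.le,
          mul_nonneg (mul_nonneg hσ0.le hk0.le) (by linarith : (0:ℝ) ≤ t - m * ((σ:ℝ)-1))]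
    · -- case B : mass on coordinates a-1 and a (i.e. columns a and a+1)
      obtain ⟨a, ha1, haσ, hlo, hhi⟩ :
          ∃ a : ℕ, 1 ≤ a ∧ a + 1 ≤ σ ∧ (a - 1) * m ≤ s - 1 ∧ s - 1 ≤ a * m := by
        have h1 := Nat.div_add_mod (s - 1 + m - 1) m
        have h2 := Nat.mod_lt (s - 1 + m - 1) (show 0 < m by omega)
        have hge : s - 1 ≤ m * ((s - 1 + m - 1) / m) := by omega
        have hle : m * ((s - 1 + m - 1) / m) ≤ s - 1 + m - 1 := by omega
        have hmσ : m * σ = m * (σ - 1) + m := by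
          have e : σ - 1 + 1 = σ := by omega
          calc m * σ = m * (σ - 1 + 1) := by rw [e]
            _ = m * (σ - 1) + m := by ring
        have hcσ : (s - 1 + m - 1) / m < σ := by
          by_contra hcon
          push_neg at hcon
          have := Nat.mul_le_mul_left m hcon
          omega
        refine ⟨max 1 ((s - 1 + m - 1) / m), le_max_left _ _, by omega, ?_, ?_⟩
        · rcases le_or_gt ((s - 1 + m - 1) / m) 1 with h | h
          · have e : max 1 ((s - 1 + m - 1) / m) = 1 := by omega
            simp [e]
          · have e : max 1 ((s - 1 + m - 1) / m) = (s - 1 + m - 1) / m := by omega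
            rw [e]
            have e2 : ((s - 1 + m - 1) / m - 1) * m = (s - 1 + m - 1) / m * m - m := by
              rw [Nat.sub_mul, one_mul]
            have e3 : (s - 1 + m - 1) / m * m = m * ((s - 1 + m - 1) / m) :=
              Nat.mul_comm _ _
            omega
        · rcases le_or_gt ((s - 1 + m - 1) / m) 1 with h | h
          · have e : max 1 ((s - 1 + m - 1) / m) = 1 := by omega
            have := Nat.mul_le_mul_left m h
            rw [e]
            omega
          · have e : max 1 ((s - 1 + m - 1) / m) = (s - 1 + m - 1) / m := by omega
            have e3 : (s - 1 + m - 1) / m * m = m * ((s - 1 + m - 1) / m) :=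
              Nat.mul_comm _ _
            rw [e]
            omega
      have ha1' : (1:ℝ) ≤ a := by exact_mod_cast ha1
      have haσ' : (a:ℝ) + 1 ≤ σ := by exact_mod_cast haσ
      have hlo' : ((a:ℝ) - 1) * m ≤ t := by
        have := (Nat.cast_le (α := ℝ)).2 hlo
        push_cast [Nat.cast_sub ha1, Nat.cast_sub hs] at this
        linarith
      have hhi' : t ≤ (a:ℝ) * m := by
        have := (Nat.cast_le (α := ℝ)).2 hhi
        push_cast [Nat.cast_sub hs] at this
        linarith
      have ha0 : (0:ℝ) < a := by linarith
      set i1 : Fin σ := ⟨a - 1, by omega⟩ with hi1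
      set i2 : Fin σ := ⟨a, by omega⟩ with hi2
      have hne : i1 ≠ i2 := by
        simp only [hi1, hi2, ne_eq, Fin.mk.injEq]
        omega
      set A : ℝ := (a:ℝ) * m - t with hA
      set B : ℝ := t - ((a:ℝ) - 1) * m with hB2
      have hA0 : (0:ℝ) ≤ A := sub_nonneg.2 hhi'
      have hB0 : (0:ℝ) ≤ B := sub_nonneg.2 hlo'
      have hv1 : ((i1:ℕ):ℝ) = (a:ℝ) - 1 := by
        show ((a - 1 : ℕ):ℝ) = (a:ℝ) - 1
        push_cast [Nat.cast_sub ha1]; ring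
      have hv2 : ((i2:ℕ):ℝ) = (a:ℝ) := rfl
      refine ⟨fun j => (if j = i1 then A else 0) + (if j = i2 then B else 0), ?_, ?_, ?_, ?_⟩
      · intro j; dsimp only
        refine add_nonneg ?_ ?_ <;> split <;> first | assumption | exact le_rfl
      · have e := sum_two_point i1 i2 hne A B (fun _ => (1:ℝ))
        simp only [one_mul] at e
        rw [e, hA, hB2]
        have : (a:ℝ) * m - t + (t - ((a:ℝ) - 1) * m) = m := by ring
        rw [this]
      · have e := sum_two_point i1 i2 hne A B (fun j => ((j:ℕ):ℝ))
        rw [e, hv1, hv2]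
        have : ((a:ℝ) - 1) * A + (a:ℝ) * B = t := by rw [hA, hB2]; ring
        rw [this]
      · have e := sum_two_point i1 i2 hne A B (fun j => 1 / (((j:ℕ):ℝ) + 1))
        rw [e, hv1, hv2]
        have e1 : (a:ℝ) - 1 + 1 = a := by ring
        rw [e1]
        -- the optimal dual index is a+1
        have hb2 : (2:ℝ) ≤ (a:ℝ) + 1 := by linarith
        have hbb : (0:ℝ) < ((a:ℝ) + 1) * ((a:ℝ) + 1 - 1) := by nlinarith
        have hFa : 2 * (m:ℝ) / ((a + 1 : ℕ):ℝ) - t / (((a + 1 : ℕ):ℝ) * (((a + 1 : ℕ):ℝ) - 1))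
            = 1 / (a:ℝ) * A + 1 / ((a:ℝ) + 1) * B := by
          push_cast
          rw [hA, hB2]
          field_simp [ha0.ne']
          ring
        have hmem : a + 1 ∈ Finset.Icc 2 σ := Finset.mem_Icc.2 ⟨by omega, haσ⟩
        have hsup_le : (Finset.Icc 2 σ).sup' (Finset.nonempty_Icc.2 hσ)
            (fun j : ℕ => 2 * (m:ℝ) / j - t / ((j:ℝ) * ((j:ℝ) - 1)))
            ≤ 1 / (a:ℝ) * A + 1 / ((a:ℝ) + 1) * B := by
          apply Finset.sup'_le
          intro k hk
          rw [Finset.mem_Icc] at hk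
          rw [← hFa]
          have hk2 : (2:ℝ) ≤ k := by exact_mod_cast hk.1
          have hk0 : (0:ℝ) < k := by linarith
          have hkk : (0:ℝ) < (k:ℝ) * ((k:ℝ) - 1) := by nlinarith
          have hb1 : ((a + 1 : ℕ):ℝ) = (a:ℝ) + 1 := by push_cast; ring
          rw [hb1]
          have hbb' : (0:ℝ) < ((a:ℝ) + 1) * (((a:ℝ) + 1) - 1) := by nlinarith
          have L : 2 * (m:ℝ) / k - t / ((k:ℝ) * ((k:ℝ) - 1))
              = (2 * m * ((k:ℝ) - 1) - t) / ((k:ℝ) * ((k:ℝ) - 1)) := by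
            field_simp [ne_of_gt (by linarith : (0:ℝ) < (k:ℝ) - 1)]
          have R : 2 * (m:ℝ) / ((a:ℝ) + 1) - t / (((a:ℝ) + 1) * (((a:ℝ) + 1) - 1))
              = (2 * m * (((a:ℝ) + 1) - 1) - t) / (((a:ℝ) + 1) * (((a:ℝ) + 1) - 1)) := by
            field_simp [ha0.ne']
          rw [L, R, div_le_div_iff₀ hkk hbb']
          rcases le_or_gt k a with hka | hka
          · have hka' : (k:ℝ) ≤ a := by exact_mod_cast hka
            nlinarith [mul_nonneg (by linarith : (0:ℝ) ≤ t - ((a:ℝ) + 1 - 2) * m)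
                (mul_nonneg (by linarith : (0:ℝ) ≤ (a:ℝ) + 1 - k)
                  (by linarith : (0:ℝ) ≤ (a:ℝ) + 1 + k - 1)),
              mul_nonneg hm0.le (mul_nonneg (by linarith : (0:ℝ) ≤ (a:ℝ) + 1 - k)
                (mul_nonneg (by linarith : (0:ℝ) < (a:ℝ) + 1).le
                  (by linarith : (0:ℝ) ≤ (a:ℝ) - k)))]
          · have hka' : (a:ℝ) + 1 ≤ k := by exact_mod_cast hka
            have hcons : (0:ℝ) ≤ ((k:ℝ) - ((a:ℝ) + 1)) * ((k:ℝ) - ((a:ℝ) + 1) - 1) := by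
              rcases le_or_gt k (a + 1) with h | h
              · have : (k:ℝ) ≤ (a:ℝ) + 1 := by exact_mod_cast h
                nlinarith
              · have : (a:ℝ) + 1 + 1 ≤ k := by exact_mod_cast h
                nlinarith
            nlinarith [mul_nonneg (by linarith : (0:ℝ) ≤ (a:ℝ) * m - t)
                (mul_nonneg (by linarith : (0:ℝ) ≤ (a:ℝ) + 1 + k - 1)
                  (by linarith : (0:ℝ) ≤ k - ((a:ℝ) + 1))),
              mul_nonneg (mul_nonneg hm0.le ha0.le) hcons]
        have hsup_ge : 1 / (a:ℝ) * A + 1 / ((a:ℝ) + 1) * B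
            ≤ (Finset.Icc 2 σ).sup' (Finset.nonempty_Icc.2 hσ)
            (fun j : ℕ => 2 * (m:ℝ) / j - t / ((j:ℝ) * ((j:ℝ) - 1))) := by
          rw [← hFa]
          exact Finset.le_sup'
            (fun j : ℕ => 2 * (m:ℝ) / j - t / ((j:ℝ) * ((j:ℝ) - 1))) hmem
        have hsup : (Finset.Icc 2 σ).sup' (Finset.nonempty_Icc.2 hσ)
            (fun j : ℕ => 2 * (m:ℝ) / j - t / ((j:ℝ) * ((j:ℝ) - 1)))
            = 1 / (a:ℝ) * A + 1 / ((a:ℝ) + 1) * B := le_antisymm hsup_le hsup_ge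
        rw [hsup]
        apply max_eq_right
        -- m/σ ≤ value at a+1
        have h1 : t / (((a:ℝ) + 1) * ((a:ℝ) + 1 - 1)) ≤ (m:ℝ) / ((a:ℝ) + 1) := by
          rw [div_le_div_iff₀ hbb (by linarith : (0:ℝ) < (a:ℝ) + 1)]
          nlinarith
        have h2 : (m:ℝ) / σ ≤ (m:ℝ) / ((a:ℝ) + 1) := by
          apply div_le_div_of_nonneg_left hm0.le (by linarith : (0:ℝ) < (a:ℝ) + 1) haσ'
        have e2 : 1 / (a:ℝ) * A + 1 / ((a:ℝ) + 1) * B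
            = 2 * (m:ℝ) / ((a:ℝ) + 1) - t / (((a:ℝ) + 1) * ((a:ℝ) + 1 - 1)) := by
          rw [hA, hB2]; field_simp [ha0.ne']; ring
        have e3 : 2 * (m:ℝ) / ((a:ℝ) + 1) - (m:ℝ) / ((a:ℝ) + 1) = (m:ℝ) / ((a:ℝ) + 1) := by
          ring
        rw [e2]
        linarith
  · -- lower bound
    rintro v ⟨x, hx0, hx1, hx2, rfl⟩
    apply max_le
    · calc (m:ℝ)/σ ≤ (∑ j, x j)/σ := by
            exact div_le_div_of_nonneg_right hx1 hσ0.le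
        _ = ∑ j : Fin σ, (1/(σ:ℝ)) * x j := by
            rw [div_eq_mul_inv, Finset.sum_mul]
            exact Finset.sum_congr rfl fun j _ => by ring
        _ ≤ _ := Finset.sum_le_sum fun j _ => by
            have hj : ((j:ℕ):ℝ) + 1 ≤ σ := by exact_mod_cast j.isLt
            have hj0 : (0:ℝ) < ((j:ℕ):ℝ)+1 := by positivity
            exact mul_le_mul_of_nonneg_right (one_div_le_one_div_of_le hj0 hj) (hx0 j)
    · apply Finset.sup'_le
      intro k hk
      rw [Finset.mem_Icc] at hk
      have hk2 : (2:ℝ) ≤ k := by exact_mod_cast hk.1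
      have hk0 : (0:ℝ) < k := by linarith
      have hk1 : (0:ℝ) < (k:ℝ) - 1 := by linarith
      set y : ℝ := 2 / k with hy
      set z : ℝ := 1 / ((k:ℝ) * ((k:ℝ) - 1)) with hz
      have hy0 : 0 ≤ y := by positivity
      have hz0 : 0 ≤ z := by positivity
      have key : ∀ j : Fin σ, y - ((j:ℕ):ℝ) * z ≤ 1 / (((j:ℕ):ℝ) + 1) := by
        intro j
        have hn0 : (0:ℝ) < ((j:ℕ):ℝ) + 1 := by positivity
        have hint : (0:ℝ) ≤ (((j:ℕ):ℝ) + 1 - k) * (((j:ℕ):ℝ) + 1 - k + 1) := by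
          rcases le_or_gt (k:ℕ) ((j:ℕ) + 1) with h | h
          · have : (k:ℝ) ≤ ((j:ℕ):ℝ) + 1 := by exact_mod_cast h
            nlinarith
          · have : ((j:ℕ):ℝ) + 1 + 1 ≤ k := by exact_mod_cast h
            nlinarith
        rw [hy, hz]
        have hkk : (0:ℝ) < (k:ℝ) * ((k:ℝ) - 1) := by positivity
        have L : 2 / (k:ℝ) - ((j:ℕ):ℝ) * (1 / ((k:ℝ) * ((k:ℝ) - 1)))
            = (2 * ((k:ℝ) - 1) - ((j:ℕ):ℝ)) / ((k:ℝ) * ((k:ℝ) - 1)) := by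
          field_simp
        rw [L, div_le_div_iff₀ hkk hn0]
        nlinarith [hint]
      calc 2 * (m:ℝ) / k - t / ((k:ℝ) * ((k:ℝ) - 1))
          = y * m - z * t := by rw [hy, hz]; ring
        _ ≤ y * (∑ j, x j) - z * (∑ j : Fin σ, ((j:ℕ):ℝ) * x j) := by
            have h1 : y * (m:ℝ) ≤ y * ∑ j, x j := mul_le_mul_of_nonneg_left hx1 hy0
            have h2 : z * (∑ j : Fin σ, ((j:ℕ):ℝ) * x j) ≤ z * t :=
              mul_le_mul_of_nonneg_left hx2 hz0
            linarith
        _ = ∑ j : Fin σ, (y - ((j:ℕ):ℝ) * z) * x j := by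
            rw [Finset.mul_sum, Finset.mul_sum, ← Finset.sum_sub_distrib]
            exact Finset.sum_congr rfl fun j _ => by ring
        _ ≤ ∑ j : Fin σ, (1 / (((j:ℕ):ℝ) + 1)) * x j :=
            Finset.sum_le_sum fun j _ => mul_le_mul_of_nonneg_right (key j) (hx0 j)
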